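/- (Chang's covering argument.) There is an absolute constant c > 0 such that the following holds. Let G be a group, let K ≥ 2, and suppose that A ⊆ G is a K-approximate group. Let M be a positive integer and M' ≥ 1 a real number, and let B ⊆ A^M be a finite set with |B| ≥ |A|/M'. Then there exist a positive integer t ≤ c(log M' + M log K) and sets S₁,…,S_t ⊆ A with |Sᵢ| ≤ 2K for each i, such that A ⊆ S_{t−1}⁻¹⋯S₁⁻¹B⁻¹BS₁⋯S_t. -/

import Mathlib

open Pointwise

/-- A finite subset `A` of a group is a `K`-approximate group if it is symmetric,
contains the identity, and `A² ⊆ XA` for some symmetric set `X` with `|X| ≤ K`. -/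
def IsApproxGroup {G : Type*} [Group G] (A : Set G) (K : ℝ) : Prop :=
  A.Finite ∧ A⁻¹ = A ∧ (1 : G) ∈ A ∧
    ∃ X : Set G, X.Finite ∧ X⁻¹ = X ∧ (X.ncard : ℝ) ≤ K ∧ A * A ⊆ X * A

namespace ChangAux
variable {G : Type*} [Group G]

lemma finite_pow {s : Set G} (hs : s.Finite) : ∀ n : ℕ, (s ^ n).Finite
  | 0 => by rw [pow_zero, ← Set.singleton_one]; exact Set.finite_singleton 1
  | n+1 => by rw [pow_succ]; exact (finite_pow hs n).mul hs

lemma ncard_mul_le (s t : Set G) : (s * t).ncard ≤ s.ncard * t.ncard := by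
  simpa [Nat.card_coe_set_eq] using Set.natCard_mul_le (s := s) (t := t)

lemma ncard_pow_le (s : Set G) : ∀ n : ℕ, (s ^ n).ncard ≤ s.ncard ^ n
  | 0 => by rw [pow_zero, pow_zero, ← Set.singleton_one, Set.ncard_singleton]
  | n+1 => by
      rw [pow_succ, pow_succ]
      exact (ncard_mul_le _ _).trans (Nat.mul_le_mul_right _ (ncard_pow_le s n))

lemma pow_subset (A X : Set G) (h : A * A ⊆ X * A) : ∀ m : ℕ, A ^ (m+1) ⊆ X ^ m * A
  | 0 => by simp
  | m+1 => by
      calc A ^ (m+2) = A ^ (m+1) * A := by rw [pow_succ]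
      _ ⊆ (X ^ m * A) * A := Set.mul_subset_mul_right (pow_subset A X h m)
      _ = X ^ m * (A * A) := by rw [mul_assoc]
      _ ⊆ X ^ m * (X * A) := Set.mul_subset_mul_left h
      _ = X ^ (m+1) * A := by rw [← mul_assoc, ← pow_succ]

lemma ncard_mul_singleton (C : Set G) (a : G) : (C * {a}).ncard = C.ncard := by
  rw [Set.mul_singleton]; exact Set.ncard_image_of_injective _ (mul_left_injective a)

lemma prod_inv_rev : ∀ L : List (Set G), (L.map (fun T => T⁻¹)).reverse.prod = L.prod⁻¹
  | [] => by simp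
  | S :: L => by
      simp only [List.map_cons, List.reverse_cons, List.prod_append, List.prod_cons,
        List.prod_nil, mul_one, prod_inv_rev L, mul_inv_rev]

lemma le_ncard_mul_of_disjoint (C : Set G) (hC : C.Finite) (S : Set G) (hS : S.Finite) :
    (S.Pairwise fun a b => Disjoint (C * {a}) (C * {b})) →
      S.ncard * C.ncard ≤ (C * S).ncard := by
  refine Set.Finite.induction_on S hS (by simp) ?_
  intro a S' haS' hS'fin ih hpair
  have hpair' : S'.Pairwise fun a b => Disjoint (C * {a}) (C * {b}) :=
    hpair.mono (Set.subset_insert _ _)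
  have hd : Disjoint (C * {a}) (C * S') := by
    rw [Set.disjoint_left]
    rintro x hxa hxS'
    rw [Set.mem_mul] at hxS'
    obtain ⟨c, hc, s', hs', rfl⟩ := hxS'
    have hne : a ≠ s' := fun h => haS' (h ▸ hs')
    have := hpair (Set.mem_insert _ _) (Set.mem_insert_of_mem _ hs') hne
    exact (Set.disjoint_left.1 this) hxa (Set.mul_mem_mul hc rfl)
  have heq : C * insert a S' = (C * {a}) ∪ (C * S') := by
    rw [Set.insert_eq, Set.mul_union]
  rw [heq, Set.ncard_union_eq hd (hC.mul (Set.finite_singleton a)) (hC.mul hS'fin),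
    Set.ncard_insert_of_notMem haS' hS'fin, ncard_mul_singleton]
  have := ih hpair'
  nlinarith [this]


lemma exists_terminal {A C : Set G} (hA : A.Finite) (hCne : C.Nonempty) (n : ℕ)
    (hno : ¬ ∃ S : Set G, S ⊆ A ∧ S.ncard = n ∧
      (S.Pairwise fun a b => Disjoint (C * {a}) (C * {b}))) :
    ∃ S : Set G, S ⊆ A ∧ S.ncard ≤ n ∧ A ⊆ C⁻¹ * C * S := by
  have hfin : {S : Set G | S ⊆ A ∧ S.Pairwise fun a b => Disjoint (C * {a}) (C * {b})}.Finite :=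
    hA.finite_subsets.subset fun S hS => hS.1
  have hne : {S : Set G | S ⊆ A ∧ S.Pairwise fun a b => Disjoint (C * {a}) (C * {b})}.Nonempty :=
    ⟨∅, Set.empty_subset _, Set.pairwise_empty _⟩
  obtain ⟨S, hSP, hmax⟩ := Set.Finite.exists_maximalFor Set.ncard _ hfin hne
  obtain ⟨hSA, hSpair⟩ := hSP
  have hSfin : S.Finite := hA.subset hSA
  refine ⟨S, hSA, ?_, ?_⟩
  · by_contra hlt
    push_neg at hlt
    obtain ⟨T, hTS, hTn⟩ := Set.exists_subset_card_eq hlt.le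
    exact hno ⟨T, hTS.trans hSA, hTn, hSpair.mono hTS⟩
  · intro a ha
    obtain ⟨c, hc⟩ := hCne
    by_cases haS : a ∈ S
    · have : (c⁻¹ * c) * a ∈ C⁻¹ * C * S :=
        Set.mul_mem_mul (Set.mul_mem_mul (Set.inv_mem_inv.2 hc) hc) haS
      simpa using this
    · have hcard : (insert a S).ncard = S.ncard + 1 := Set.ncard_insert_of_notMem haS hSfin
      have hnotP : ¬ (insert a S).Pairwise fun a b => Disjoint (C * {a}) (C * {b}) := by
        intro hP
        have := hmax (⟨Set.insert_subset ha hSA, hP⟩ :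
          insert a S ∈ {S : Set G | S ⊆ A ∧ S.Pairwise fun a b => Disjoint (C * {a}) (C * {b})}) (by omega)
        omega
      haveI : Std.Symm (fun a b : G => Disjoint (C * {a}) (C * {b})) := ⟨fun x y h => h.symm⟩
      rw [Set.pairwise_insert_of_symmetric] at hnotP
      push_neg at hnotP
      obtain ⟨b, hbS, -, hnd⟩ := hnotP hSpair
      obtain ⟨x, hx1, hx2⟩ := Set.not_disjoint_iff.1 hnd
      rw [Set.mem_mul] at hx1 hx2
      obtain ⟨c₁, hc₁, y, hy, hxy⟩ := hx1
      obtain ⟨c₂, hc₂, z, hz, hxz⟩ := hx2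
      rw [Set.mem_singleton_iff] at hy hz
      rw [hy] at hxy
      rw [hz] at hxz
      have hab : a = (c₁⁻¹ * c₂) * b := by
        have : c₁ * a = c₂ * b := by rw [hxy, hxz]
        rw [mul_assoc, ← this, ← mul_assoc, inv_mul_cancel, one_mul]
      rw [hab]
      exact Set.mul_mem_mul (Set.mul_mem_mul (Set.inv_mem_inv.2 hc₁) hc₂) hbS


lemma card_pow_bound {A X : Set G} (hAfin : A.Finite) (hXfin : X.Finite) {K : ℝ}
    (hXK : (X.ncard : ℝ) ≤ K) (hXA : A * A ⊆ X * A) (m : ℕ) :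
    ((A ^ (m+1)).ncard : ℝ) ≤ K ^ m * A.ncard := by
  have h1 : (A ^ (m+1)).ncard ≤ (X ^ m * A).ncard :=
    Set.ncard_le_ncard (pow_subset A X hXA m) ((finite_pow hXfin m).mul hAfin)
  have h2 : (X ^ m * A).ncard ≤ (X ^ m).ncard * A.ncard := ncard_mul_le _ _
  have h3 : (X ^ m).ncard ≤ X.ncard ^ m := ncard_pow_le X m
  have h4 : ((X.ncard : ℝ)) ^ m ≤ K ^ m := pow_le_pow_left₀ (by positivity) hXK m
  calc ((A ^ (m+1)).ncard : ℝ) ≤ ((X ^ m).ncard : ℝ) * A.ncard := by exact_mod_cast h1.trans h2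
  _ ≤ (X.ncard : ℝ) ^ m * A.ncard := by
      have : ((X ^ m).ncard : ℝ) ≤ (X.ncard : ℝ) ^ m := by exact_mod_cast h3
      have h0 : (0:ℝ) ≤ (A.ncard : ℝ) := by positivity
      nlinarith
  _ ≤ K ^ m * A.ncard := by
      have h0 : (0:ℝ) ≤ (A.ncard : ℝ) := Nat.cast_nonneg _
      nlinarith

lemma log_td_gt_third : (1/3 : ℝ) < Real.log (3/2) := by
  have h4 : (1:ℝ) < Real.log (27/8) := by
    rw [Real.lt_log_iff_exp_lt (by norm_num)]
    have := Real.exp_one_lt_d9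
    linarith
  have h5 : Real.log (27/8) = 3 * Real.log (3/2) := by
    rw [show (27/8:ℝ) = (3/2)^3 by norm_num, Real.log_pow]
    norm_num
  linarith [h5 ▸ h4]

lemma log_two_gt_half : (1/2 : ℝ) < Real.log 2 := by
  have h4 : (1:ℝ) < Real.log 4 := by
    rw [Real.lt_log_iff_exp_lt (by norm_num)]
    have := Real.exp_one_lt_d9
    linarith
  have h5 : Real.log 4 = 2 * Real.log 2 := by
    rw [show (4:ℝ) = 2^2 by norm_num, Real.log_pow]
    norm_num
  linarith [h5 ▸ h4]

lemma length_bound {K : ℝ} (hK : 2 ≤ K) {A X : Set G}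
    (hAfin : A.Finite) (h1A : (1:G) ∈ A) (hXfin : X.Finite)
    (hXK : (X.ncard : ℝ) ≤ K) (hXA : A * A ⊆ X * A)
    {M : ℕ} (hM : 0 < M) {M' : ℝ} (hM' : 1 ≤ M') {B : Set G}
    (hBcard : (A.ncard : ℝ) / M' ≤ (B.ncard : ℝ))
    {j : ℕ} {C : Set G} (hC1 : ⌊2*K⌋₊ ^ j * B.ncard ≤ C.ncard) (hC2 : C ⊆ A ^ (M + j)) :
    (j : ℝ) ≤ 3 * (Real.log M' + M * Real.log K) := by
  have hK0 : (0:ℝ) < K := by linarith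
  have hM'0 : (0:ℝ) < M' := by linarith
  have hA1 : 1 ≤ A.ncard := (Set.ncard_pos hAfin).2 ⟨1, h1A⟩
  have hBpos : (0:ℝ) < B.ncard := by
    have : (0:ℝ) < (A.ncard : ℝ) / M' := by
      apply div_pos _ hM'0
      exact_mod_cast hA1
    linarith
  have hAM' : (A.ncard : ℝ) ≤ (B.ncard : ℝ) * M' := (div_le_iff₀ hM'0).1 hBcard
  have hnK : 3/2 * K ≤ (⌊2*K⌋₊ : ℝ) := by
    have := Nat.sub_one_lt_floor (2*K)
    linarith
  have hMj : M + j = (M - 1 + j) + 1 := by omega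
  have hpow : ((A ^ (M + j)).ncard : ℝ) ≤ K ^ (M - 1 + j) * A.ncard := by
    rw [hMj]
    exact card_pow_bound hAfin hXfin hXK hXA _
  have hCle : ((C.ncard : ℝ)) ≤ ((A ^ (M + j)).ncard : ℝ) := by
    exact_mod_cast Set.ncard_le_ncard hC2 (finite_pow hAfin _)
  have hchain : ((3/2) * K) ^ j * (B.ncard : ℝ) ≤ K ^ (M - 1 + j) * ((B.ncard : ℝ) * M') := by
    have hle1 : ((3/2) * K) ^ j ≤ ((⌊2*K⌋₊ : ℝ)) ^ j := pow_le_pow_left₀ (by positivity) hnK j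
    have hle2 : ((⌊2*K⌋₊ : ℝ)) ^ j * (B.ncard : ℝ) ≤ (C.ncard : ℝ) := by exact_mod_cast hC1
    have hle3 : (K ^ (M - 1 + j)) * (A.ncard : ℝ) ≤ K ^ (M - 1 + j) * ((B.ncard : ℝ) * M') := by
      have : (0:ℝ) ≤ K ^ (M - 1 + j) := by positivity
      nlinarith
    nlinarith
  have hcancelB : ((3/2) * K) ^ j ≤ K ^ (M - 1 + j) * M' := by
    have h := hchain
    rw [show K ^ (M-1+j) * ((B.ncard:ℝ) * M') = (K ^ (M-1+j) * M') * B.ncard by ring] at h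
    exact le_of_mul_le_mul_right h hBpos
  have hsplit : ((3/2):ℝ) ^ j * K ^ j ≤ (K ^ (M-1) * M') * K ^ j := by
    have h1 : ((3/2) * K) ^ j = (3/2:ℝ)^j * K^j := mul_pow _ _ _
    have h2 : K ^ (M - 1 + j) = K ^ (M-1) * K ^ j := pow_add K (M-1) j
    calc ((3/2):ℝ) ^ j * K ^ j = ((3/2) * K) ^ j := (mul_pow _ _ _).symm
    _ ≤ K ^ (M - 1 + j) * M' := hcancelB
    _ = (K ^ (M-1) * M') * K ^ j := by rw [h2]; ring
  have hKj : (0:ℝ) < K ^ j := by positivity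
  have hfin : ((3/2):ℝ) ^ j ≤ K ^ (M-1) * M' := le_of_mul_le_mul_right hsplit hKj
  have hlog : (j:ℝ) * Real.log (3/2) ≤ ((M-1 : ℕ):ℝ) * Real.log K + Real.log M' := by
    have := Real.log_le_log (by positivity) hfin
    rwa [Real.log_pow, Real.log_mul (by positivity) (by linarith), Real.log_pow] at this
  have hlogK : 0 ≤ Real.log K := Real.log_nonneg (by linarith)
  have hlogM' : 0 ≤ Real.log M' := Real.log_nonneg hM'
  have hM1 : ((M-1 : ℕ):ℝ) ≤ (M:ℝ) := by exact_mod_cast Nat.cast_le.2 (Nat.sub_le M 1)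
  have h32 := log_td_gt_third
  have hj0 : (0:ℝ) ≤ (j:ℝ) := Nat.cast_nonneg j
  nlinarith [mul_le_mul_of_nonneg_right hM1 hlogK, mul_le_mul_of_nonneg_left h32.le hj0]


theorem main_aux {K : ℝ} (hK : 2 ≤ K) {A X : Set G}
    (hAfin : A.Finite) (h1A : (1:G) ∈ A) (hXfin : X.Finite)
    (hXK : (X.ncard : ℝ) ≤ K) (hXA : A * A ⊆ X * A)
    {M : ℕ} (hM : 0 < M) {M' : ℝ} (hM' : 1 ≤ M')
    {B : Set G} (hBfin : B.Finite) (hBA : B ⊆ A ^ M)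
    (hBcard : (A.ncard : ℝ) / M' ≤ (B.ncard : ℝ)) :
    ∀ N : ℕ, ∀ L : List (Set G),
      (∀ T ∈ L, T ⊆ A ∧ T.ncard = ⌊2*K⌋₊) →
      (⌊2*K⌋₊ ^ L.length * B.ncard ≤ (B * L.prod).ncard) →
      (B * L.prod ⊆ A ^ (M + L.length)) →
      (⌈3 * (Real.log M' + (M:ℝ) * Real.log K)⌉₊ + 1 ≤ L.length + N) →
      ∃ (t : ℕ) (S : ℕ → Set G),
        0 < t ∧ (t : ℝ) ≤ 5 * (Real.log M' + M * Real.log K) ∧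
        (∀ i, 1 ≤ i → i ≤ t → S i ⊆ A ∧ ((S i).ncard : ℝ) ≤ 2 * K) ∧
        A ⊆ (((List.range (t - 1)).reverse.map fun i => (S (i + 1))⁻¹).prod) *
              B⁻¹ * B * (((List.range t).map fun i => S (i + 1)).prod) := by
  have hK0 : (0:ℝ) < K := by linarith
  have hn2K : ((⌊2*K⌋₊ : ℕ) : ℝ) ≤ 2 * K := Nat.floor_le (by positivity)
  have hn1 : 1 ≤ ⌊2*K⌋₊ := by
    rw [Nat.le_floor_iff (by positivity)]
    push_cast; linarith
  have hBne : B.Nonempty := by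
    rcases B.eq_empty_or_nonempty with h | h
    · exfalso
      have hA1 : 1 ≤ A.ncard := (Set.ncard_pos hAfin).2 ⟨1, h1A⟩
      rw [h] at hBcard
      simp only [Set.ncard_empty, Nat.cast_zero] at hBcard
      have : (0:ℝ) < (A.ncard : ℝ) / M' := div_pos (by exact_mod_cast hA1) (by linarith)
      linarith
    · exact h
  have hB1 : 1 ≤ B.ncard := (Set.ncard_pos hBfin).2 hBne
  intro N
  induction N with
  | zero =>
      intro L hL1 hL2 hL3 hfuel
      exfalso
      have h1 : (L.length : ℝ) ≤ 3 * (Real.log M' + M * Real.log K) :=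
        length_bound hK hAfin h1A hXfin hXK hXA hM hM' hBcard hL2 hL3
      have h2 : (L.length : ℝ) ≤ (⌈3 * (Real.log M' + (M:ℝ) * Real.log K)⌉₊ : ℝ) :=
        h1.trans (Nat.le_ceil _)
      have h3 : L.length ≤ ⌈3 * (Real.log M' + (M:ℝ) * Real.log K)⌉₊ := by exact_mod_cast h2
      omega
  | succ N ih =>
      intro L hL1 hL2 hL3 hfuel
      have hCfin : (B * L.prod).Finite := (finite_pow hAfin _).subset hL3
      have hCne : (B * L.prod).Nonempty := by
        have h0 : 0 < ⌊2*K⌋₊ ^ L.length * B.ncard :=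
          Nat.mul_pos (Nat.pow_pos hn1) hB1
        have : 0 < (B * L.prod).ncard := lt_of_lt_of_le h0 hL2
        exact Set.nonempty_of_ncard_ne_zero this.ne'
      by_cases hcase : ∃ S : Set G, S ⊆ A ∧ S.ncard = ⌊2*K⌋₊ ∧
          (S.Pairwise fun a b => Disjoint ((B * L.prod) * {a}) ((B * L.prod) * {b}))
      · obtain ⟨S, hSA, hSn, hSd⟩ := hcase
        have hSfin : S.Finite := hAfin.subset hSA
        have hprodeq : (L ++ [S]).prod = L.prod * S := by
          rw [List.prod_append, List.prod_cons, List.prod_nil, mul_one]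
        refine ih (L ++ [S]) ?_ ?_ ?_ ?_
        · intro T hT
          rcases List.mem_append.1 hT with h | h
          · exact hL1 T h
          · simp only [List.mem_singleton] at h
            subst h; exact ⟨hSA, hSn⟩
        · rw [hprodeq, List.length_append, List.length_cons, List.length_nil, ← mul_assoc]
          have hgrow := le_ncard_mul_of_disjoint (B * L.prod) hCfin S hSfin hSd
          calc ⌊2*K⌋₊ ^ (L.length + (0+1)) * B.ncard
              = ⌊2*K⌋₊ * (⌊2*K⌋₊ ^ L.length * B.ncard) := by ring
          _ ≤ ⌊2*K⌋₊ * (B * L.prod).ncard := Nat.mul_le_mul_left _ hL2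
          _ = S.ncard * (B * L.prod).ncard := by rw [hSn]
          _ ≤ ((B * L.prod) * S).ncard := hgrow
        · rw [hprodeq, List.length_append, List.length_cons, List.length_nil, ← mul_assoc]
          have : (B * L.prod) * S ⊆ A ^ (M + L.length) * A := Set.mul_subset_mul hL3 hSA
          rw [show M + (L.length + (0+1)) = (M + L.length) + 1 by omega, pow_succ]
          exact this
        · rw [List.length_append, List.length_cons, List.length_nil]
          omega
      · obtain ⟨S, hSA, hSn, hcov⟩ := exists_terminal hAfin hCne ⌊2*K⌋₊ hcase
        refine ⟨L.length + 1, fun i => (L ++ [S]).getD (i-1) ∅, Nat.succ_pos _, ?_, ?_, ?_⟩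
        · have h1 : (L.length : ℝ) ≤ 3 * (Real.log M' + M * Real.log K) :=
            length_bound hK hAfin h1A hXfin hXK hXA hM hM' hBcard hL2 hL3
          have hlogM' : 0 ≤ Real.log M' := Real.log_nonneg hM'
          have hlogK : Real.log 2 ≤ Real.log K := Real.log_le_log (by norm_num) hK
          have hM1 : (1:ℝ) ≤ (M:ℝ) := by exact_mod_cast hM
          have h2 := log_two_gt_half
          have hR : (1:ℝ) ≤ 2 * (Real.log M' + M * Real.log K) := by nlinarith
          push_cast
          linarith
        · intro i hi1 hit
          dsimp only
          have hmem : (L ++ [S]).getD (i-1) ∅ ∈ L ++ [S] := by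
            have hlen : i - 1 < (L ++ [S]).length := by
              rw [List.length_append, List.length_cons, List.length_nil]; omega
            rw [List.getD_eq_getElem _ _ hlen]
            exact List.getElem_mem hlen
          rcases List.mem_append.1 hmem with h | h
          · obtain ⟨h1, h2⟩ := hL1 _ h
            exact ⟨h1, by rw [h2]; exact hn2K⟩
          · simp only [List.mem_singleton] at h
            rw [h]
            refine ⟨hSA, ?_⟩
            calc ((S.ncard : ℕ) : ℝ) ≤ ((⌊2*K⌋₊ : ℕ) : ℝ) := by exact_mod_cast hSn
            _ ≤ 2*K := hn2K
        · -- the covering inclusion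
          have hlist1 : (List.range (L.length + 1)).map
              (fun i => (L ++ [S]).getD ((i+1)-1) ∅) = L ++ [S] := by
            apply List.ext_getElem
            · simp
            · intro i h1 h2
              simp only [List.getElem_map, List.getElem_range]
              rw [List.getD_eq_getElem _ _ (by simpa using h2)]
              simp
          have hlist2 : (List.range (L.length + 1 - 1)).map
              (fun i => (L ++ [S]).getD ((i+1)-1) ∅) = L := by
            apply List.ext_getElem
            · simp
            · intro i h1 h2
              simp only [List.getElem_map, List.getElem_range, Nat.add_sub_cancel]
              have hi : i < (L ++ [S]).length := by
                rw [List.length_append, List.length_cons, List.length_nil]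
                simp at h1; omega
              rw [List.getD_eq_getElem _ _ hi]
              exact List.getElem_append_left (by simpa using h2)
          have hrev : ((List.range (L.length + 1 - 1)).reverse.map
              (fun i => ((L ++ [S]).getD ((i+1)-1) ∅)⁻¹)).prod = L.prod⁻¹ := by
            rw [List.map_reverse]
            have h2 : List.map (fun i => ((L ++ [S]).getD ((i+1)-1) ∅)⁻¹)
                (List.range (L.length + 1 - 1)) = List.map (fun T => T⁻¹) L := by
              conv_rhs => rw [← hlist2]
              rw [List.map_map]
              rfl
            rw [h2, prod_inv_rev]
          rw [hlist1, hrev]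
          have heq : (B * L.prod)⁻¹ * (B * L.prod) * S
              = L.prod⁻¹ * B⁻¹ * B * (L ++ [S]).prod := by
            rw [List.prod_append, List.prod_cons, List.prod_nil, mul_one, mul_inv_rev]
            simp only [mul_assoc]
          rw [← heq]
          exact hcov


end ChangAux

theorem chang_covering :
    ∃ c : ℝ, 0 < c ∧
      ∀ (G : Type*) [Group G], ∀ K : ℝ, 2 ≤ K → ∀ A : Set G, IsApproxGroup A K →
        ∀ M : ℕ, 0 < M → ∀ M' : ℝ, 1 ≤ M' →
          ∀ B : Set G, B.Finite → B ⊆ A ^ M → (A.ncard : ℝ) / M' ≤ (B.ncard : ℝ) →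
            ∃ (t : ℕ) (S : ℕ → Set G),
              0 < t ∧ (t : ℝ) ≤ c * (Real.log M' + M * Real.log K) ∧
              (∀ i, 1 ≤ i → i ≤ t → S i ⊆ A ∧ ((S i).ncard : ℝ) ≤ 2 * K) ∧
              A ⊆ (((List.range (t - 1)).reverse.map fun i => (S (i + 1))⁻¹).prod) *
                    B⁻¹ * B * (((List.range t).map fun i => S (i + 1)).prod) := by
  refine ⟨5, by norm_num, ?_⟩
  intro G _ K hK A hA M hM M' hM' B hBfin hBA hBcard
  obtain ⟨hAfin, hAsymm, h1A, X, hXfin, hXsymm, hXK, hXA⟩ := hA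
  exact ChangAux.main_aux hK hAfin h1A hXfin hXK hXA hM hM' hBfin hBA hBcard
      (⌈3 * (Real.log M' + (M:ℝ) * Real.log K)⌉₊ + 1) [] (by simp) (by simp)
      (by simpa using hBA) (by simp)
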